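/- (Direct Mapping Theorem at 0.) Let a < b be real numbers and let f : (0,∞) → ℂ be continuous with ∫_{(0,∞)} t^{σ-1}|f(t)| dt < ∞ for every σ ∈ (a,b). Let M ∈ ℤ with −M < a, let J ∈ ℕ, and for j < J let p_j ∈ ℂ with −a ≤ Re p_j < M, m_j ∈ ℕ, and a_{jk} ∈ ℂ (0 ≤ k ≤ m_j). Assume there are C, δ > 0 such that |f(t) − Σ_{j<J} Σ_{k=0}^{m_j} a_{jk} t^{p_j} (log t)^k| ≤ C·t^M for all 0 < t < δ. Then there exists F, complex-differentiable on {s : −M < Re s < b} \ {−p_j : j < J}, with F(s) = mellin f s for a < Re s < b, such that s ↦ F(s) − Σ_{j<J} Σ_{k=0}^{m_j} a_{jk} (−1)^k k!/(s + p_j)^{k+1} extends to a complex-differentiable function on the whole strip {s : −M < Re s < b}. -/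

import Mathlib

open MeasureTheory Complex

section MDhelpers

open Set Filter Asymptotics Metric

lemma MD.contOn_cpow (s : ℂ) : ContinuousOn (fun t : ℝ => (t:ℂ) ^ s) (Set.Ioi 0) := fun t ht =>
  (Complex.continuousAt_ofReal_cpow_const t s (Or.inr (ne_of_gt ht))).continuousWithinAt

lemma MD.contOn_log : ContinuousOn (fun t : ℝ => (Real.log t : ℂ)) (Set.Ioi 0) := fun t ht =>
  (Complex.continuous_ofReal.continuousAt.comp
    (Real.continuousAt_log (ne_of_gt ht))).continuousWithinAt

lemma MD.contOn_rpow (r : ℝ) : ContinuousOn (fun t : ℝ => t ^ r) (Set.Ioi 0) := fun t ht =>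
  (Real.continuousAt_rpow_const t r (Or.inl (ne_of_gt ht))).continuousWithinAt

lemma MD.aux_int {σ : ℝ} (hσ : 0 < σ) (k : ℕ) :
    IntegrableOn (fun t : ℝ => t ^ (σ-1) * |Real.log t| ^ k) (Set.Ioc 0 1) := by
  set η : ℝ := σ / (2*(k+1)) with hηdef
  have hη0 : 0 < η := by positivity
  have hηk : η * k ≤ σ / 2 := by
    calc η * k ≤ η * (k+1) := by
          apply mul_le_mul_of_nonneg_left (by push_cast; linarith) hη0.le
      _ = σ / 2 := by
          rw [hηdef, div_mul_eq_mul_div, mul_div_mul_right _ _ (by positivity : ((k:ℝ)+1) ≠ 0)]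
  have hexp : (-1:ℝ) < σ - 1 - η * k := by linarith
  have hmaj : IntegrableOn (fun t : ℝ => η⁻¹ ^ k * t ^ (σ - 1 - η * k)) (Set.Ioc 0 1) := by
    refine Integrable.const_mul ?_ _
    exact (intervalIntegrable_iff_integrableOn_Ioc_of_le zero_le_one).mp
      (intervalIntegral.intervalIntegrable_rpow' hexp)
  refine hmaj.mono' ?_ ?_
  · refine (((MD.contOn_rpow (σ-1)).mono ?_).mul
      (((Real.continuousOn_log.mono ?_).abs).pow k)).aestronglyMeasurable measurableSet_Ioc
    · intro t ht; exact ht.1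
    · intro t ht; exact ne_of_gt ht.1
  · filter_upwards [ae_restrict_mem measurableSet_Ioc] with t ht
    have ht0 : (0:ℝ) < t := ht.1
    have hlog : |Real.log t| ≤ t ^ (-η) / η := by
      rw [abs_of_nonpos (Real.log_nonpos ht0.le ht.2), ← Real.log_inv]
      calc Real.log t⁻¹ ≤ t⁻¹ ^ η / η := Real.log_le_rpow_div (inv_nonneg.2 ht0.le) hη0
        _ = t ^ (-η) / η := by rw [Real.inv_rpow ht0.le, ← Real.rpow_neg ht0.le]
    have h1 : |Real.log t| ^ k ≤ (t ^ (-η) / η) ^ k :=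
      pow_le_pow_left₀ (abs_nonneg _) hlog k
    have h2 : (t ^ (-η) / η) ^ k = t ^ (-(η*k)) * η⁻¹ ^ k := by
      rw [div_pow, ← Real.rpow_natCast (t ^ (-η)) k, ← Real.rpow_mul ht0.le]
      rw [div_eq_mul_inv, inv_pow]
      ring_nf
    rw [Real.norm_eq_abs, _root_.abs_of_nonneg (by positivity)]
    calc t ^ (σ-1) * |Real.log t| ^ k ≤ t ^ (σ-1) * (t ^ (-(η*k)) * η⁻¹ ^ k) := by
          rw [← h2]; exact mul_le_mul_of_nonneg_left h1 (Real.rpow_nonneg ht0.le _)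
      _ = η⁻¹ ^ k * t ^ (σ - 1 - η * k) := by
          rw [← mul_assoc, ← Real.rpow_add ht0]; ring_nf

lemma MD.DUI {S : Set ℝ} (hS : MeasurableSet S) (hS' : S ⊆ Set.Ioi (0:ℝ))
    {h : ℝ → ℂ} {s₀ : ℂ} {bound : ℝ → ℝ} {ε : ℝ} (hε : 0 < ε)
    (hmeas : ∀ s : ℂ, AEStronglyMeasurable (fun t : ℝ => (t:ℂ)^(s-1) * h t) (volume.restrict S))
    (hmeas' : AEStronglyMeasurable (fun t : ℝ => (t:ℂ)^(s₀-1) * ((Real.log t : ℂ) * h t))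
      (volume.restrict S))
    (hb : ∀ t ∈ S, ∀ s ∈ Metric.ball s₀ ε, ‖(t:ℂ)^(s-1) * ((Real.log t : ℂ) * h t)‖ ≤ bound t)
    (hbi : IntegrableOn bound S)
    (hi : IntegrableOn (fun t : ℝ => (t:ℂ)^(s₀-1) * h t) S) :
    HasDerivAt (fun s : ℂ => ∫ t in S, (t:ℂ)^(s-1) * h t)
      (∫ t in S, (t:ℂ)^(s₀-1) * ((Real.log t : ℂ) * h t)) s₀ := by
  have main := hasDerivAt_integral_of_dominated_loc_of_deriv_le (μ := volume.restrict S)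
    (F := fun s t => (t:ℂ)^(s-1) * h t)
    (F' := fun s t => (t:ℂ)^(s-1) * ((Real.log t:ℂ) * h t))
    (bound := bound) (Metric.ball_mem_nhds s₀ hε) (Filter.Eventually.of_forall hmeas) hi hmeas' ?_ hbi ?_
  · exact main.2
  · exact (ae_restrict_mem hS).mono fun t ht s hs => hb t ht s hs
  · refine (ae_restrict_mem hS).mono fun t ht s hs => ?_
    have ht0 : (0:ℝ) < t := hS' ht
    have ht' : (t:ℂ) ≠ 0 := ofReal_ne_zero.mpr (ne_of_gt ht0)
    have u1 : HasDerivAt (fun z : ℂ => (t:ℂ)^(z-1)) ((t:ℂ)^(s-1) * (Real.log t : ℂ)) s := by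
      convert ((hasDerivAt_id' s).sub_const 1).const_cpow (Or.inl ht') using 1
      rw [Complex.ofReal_log ht0.le]; ring
    exact (u1.mul_const (h t)).congr_deriv (by ring)

lemma MD.norm_cpow_mul {t : ℝ} (ht : 0 < t) (s z : ℂ) :
    ‖(t:ℂ)^s * z‖ = t ^ s.re * ‖z‖ := by
  rw [norm_mul, Complex.norm_cpow_eq_rpow_re_of_pos ht]

lemma MD.norm_log_pow (t : ℝ) (k : ℕ) :
    ‖((Real.log t : ℂ)) ^ k‖ = |Real.log t| ^ k := by
  rw [norm_pow, Complex.norm_real, Real.norm_eq_abs]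

lemma MD.re_lower {w s : ℂ} {ε : ℝ} (hs : s ∈ Metric.ball w ε) : w.re - ε < s.re := by
  have h1 : |(s - w).re| ≤ ‖s - w‖ := Complex.abs_re_le_norm _
  have h2 : ‖s - w‖ < ε := by rwa [Metric.mem_ball, Complex.dist_eq] at hs
  have h3 := (abs_le.mp h1)
  simp only [Complex.sub_re] at h3
  linarith [h3.1]

lemma MD.re_upper {w s : ℂ} {ε : ℝ} (hs : s ∈ Metric.ball w ε) : s.re < w.re + ε := by
  have h1 : |(s - w).re| ≤ ‖s - w‖ := Complex.abs_re_le_norm _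
  have h2 : ‖s - w‖ < ε := by rwa [Metric.mem_ball, Complex.dist_eq] at hs
  have h3 := (abs_le.mp h1)
  simp only [Complex.sub_re] at h3
  linarith [h3.2]

lemma MD.meas_Ioc (s : ℂ) (k : ℕ) :
    AEStronglyMeasurable (fun t : ℝ => (t:ℂ)^(s-1) * (Real.log t : ℂ)^k)
      (volume.restrict (Set.Ioc (0:ℝ) 1)) :=
  (((MD.contOn_cpow (s-1)).mono Set.Ioc_subset_Ioi_self).mul
    ((MD.contOn_log.mono Set.Ioc_subset_Ioi_self).pow k)).aestronglyMeasurable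
      measurableSet_Ioc

lemma MD.integrableOn_cpow_log (w : ℂ) (hw : 0 < w.re) (k : ℕ) :
    IntegrableOn (fun t : ℝ => (t:ℂ)^(w-1) * (Real.log t : ℂ)^k) (Set.Ioc (0:ℝ) 1) := by
  refine (MD.aux_int hw k).mono' (MD.meas_Ioc w k) ?_
  filter_upwards [ae_restrict_mem measurableSet_Ioc] with t ht
  rw [MD.norm_cpow_mul ht.1, MD.norm_log_pow]
  simp [Complex.sub_re]

lemma MD.key (k : ℕ) : ∀ w : ℂ, 0 < w.re →
    (∫ t in Set.Ioc (0:ℝ) 1, (t:ℂ)^(w-1) * (Real.log t : ℂ)^k)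
      = (-1)^k * (k.factorial : ℂ) / w^(k+1) := by
  induction k with
  | zero =>
    intro w hw
    have hw0 : w ≠ 0 := fun h => by simp [h] at hw
    simp only [pow_zero, mul_one, Nat.factorial_zero, Nat.cast_one, pow_one]
    rw [← intervalIntegral.integral_of_le zero_le_one]
    rw [integral_cpow (Or.inl (by simp [Complex.sub_re]; linarith))]
    simp [hw0, Complex.zero_cpow hw0, sub_add_cancel]
  | succ k ih =>
    intro w hw
    have hw0 : w ≠ 0 := fun h => by simp [h] at hw
    have hσ : 0 < w.re / 2 := by linarith
    have hDer : HasDerivAt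
        (fun z : ℂ => ∫ t in Set.Ioc (0:ℝ) 1, (t:ℂ)^(z-1) * (Real.log t:ℂ)^k)
        (∫ t in Set.Ioc (0:ℝ) 1, (t:ℂ)^(w-1) * ((Real.log t:ℂ) * (Real.log t:ℂ)^k)) w := by
      refine MD.DUI measurableSet_Ioc Set.Ioc_subset_Ioi_self hσ
        (fun s => MD.meas_Ioc s k) ?_ ?_ (MD.aux_int hσ (k+1)) (MD.integrableOn_cpow_log w hw k)
      · refine (MD.meas_Ioc w (k+1)).congr ?_
        filter_upwards [ae_restrict_mem measurableSet_Ioc] with t _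
        rw [pow_succ']
      · intro t ht s hs
        have hre : w.re/2 - 1 ≤ s.re - 1 := by have := MD.re_lower hs; linarith
        calc ‖(t:ℂ)^(s-1) * ((Real.log t:ℂ) * (Real.log t:ℂ)^k)‖
            = t ^ (s.re - 1) * |Real.log t| ^ (k+1) := by
              rw [MD.norm_cpow_mul ht.1, ← pow_succ', MD.norm_log_pow]
              simp [Complex.sub_re]
          _ ≤ t ^ (w.re/2 - 1) * |Real.log t| ^ (k+1) :=
              mul_le_mul_of_nonneg_right
                (Real.rpow_le_rpow_of_exponent_ge ht.1 ht.2 hre) (by positivity)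
    have h1 : (∫ t in Set.Ioc (0:ℝ) 1, (t:ℂ)^(w-1) * (Real.log t:ℂ)^(k+1))
        = deriv (fun z : ℂ => ∫ t in Set.Ioc (0:ℝ) 1, (t:ℂ)^(z-1) * (Real.log t:ℂ)^k) w := by
      rw [hDer.deriv]
      refine setIntegral_congr_fun measurableSet_Ioc fun t _ => ?_
      rw [pow_succ']
    rw [h1]
    have hev : (fun z : ℂ => ∫ t in Set.Ioc (0:ℝ) 1, (t:ℂ)^(z-1) * (Real.log t:ℂ)^k)
        =ᶠ[nhds w] (fun z : ℂ => (-1)^k * (k.factorial : ℂ) / z^(k+1)) :=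
      Filter.eventually_of_mem
        ((isOpen_lt continuous_const Complex.continuous_re).mem_nhds hw) fun z hz => ih z hz
    rw [hev.deriv_eq]
    have hΨ : HasDerivAt (fun z : ℂ => (-1)^k * (k.factorial : ℂ) / z^(k+1))
        (((-1)^k * (k.factorial : ℂ)) * (-(((k:ℂ)+1) * w^k) / (w^(k+1))^2)) w := by
      have h2 := ((hasDerivAt_pow (k+1) w).inv (pow_ne_zero _ hw0)).const_mul
        ((-1:ℂ)^k * (k.factorial : ℂ))
      simp only [Nat.add_sub_cancel, Nat.cast_add, Nat.cast_one] at h2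
      refine HasDerivAt.congr_deriv (h2.congr_of_eventuallyEq ?_) ?_
      · filter_upwards with z; rw [div_eq_mul_inv]; rfl
      · ring
    rw [hΨ.deriv]
    have hfac : ((k+1).factorial : ℂ) = ((k:ℂ)+1) * (k.factorial : ℂ) := by
      rw [Nat.factorial_succ]; push_cast; ring
    rw [hfac]
    field_simp
    ring

end MDhelpers

/-- Direct Mapping Theorem at `0`: if `f` has a log-polyhomogeneous asymptotic expansion
at `0` up to order `t^M`, then its Mellin transform extends meromorphically to the strip
`-M < Re s < b`, with singular expansion `Σ_{j,k} a_{jk} (-1)^k k!/(s+p_j)^{k+1}`. -/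
theorem mellin_direct_mapping
    (a b : ℝ) (hab : a < b) (f : ℝ → ℂ) (hf : ContinuousOn f (Set.Ioi (0 : ℝ)))
    (hint : ∀ σ ∈ Set.Ioo a b,
      IntegrableOn (fun t : ℝ => t ^ (σ - 1) * ‖f t‖) (Set.Ioi (0 : ℝ)))
    (M : ℤ) (hM : (-M : ℝ) < a) (J : ℕ) (p : Fin J → ℂ)
    (hp : ∀ j, -a ≤ (p j).re ∧ (p j).re < (M : ℝ))
    (m : Fin J → ℕ) (A : Fin J → ℕ → ℂ)
    (hasymp : ∃ C δ : ℝ, 0 < C ∧ 0 < δ ∧ ∀ t : ℝ, 0 < t → t < δ →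
      ‖f t - ∑ j, ∑ k ∈ Finset.range (m j + 1),
          A j k * (t : ℂ) ^ (p j) * (Real.log t : ℂ) ^ k‖
        ≤ C * t ^ (M : ℝ)) :
    ∃ F : ℂ → ℂ,
      (∀ s : ℂ, (-M : ℝ) < s.re → s.re < b → (∀ j, s ≠ -(p j)) →
        DifferentiableAt ℂ F s) ∧
      (∀ s : ℂ, a < s.re → s.re < b → F s = mellin f s) ∧
      ∃ G : ℂ → ℂ,
        (∀ s : ℂ, (-M : ℝ) < s.re → s.re < b → DifferentiableAt ℂ G s) ∧
        ∀ s : ℂ, (-M : ℝ) < s.re → s.re < b → (∀ j, s ≠ -(p j)) →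
          G s = F s - ∑ j, ∑ k ∈ Finset.range (m j + 1),
            A j k * ((-1) ^ k * (k.factorial : ℂ)) / (s + p j) ^ (k + 1) := by
  obtain ⟨C, δ, hC, hδ, hbound⟩ := hasymp
  set E : ℝ → ℂ := fun t => ∑ j, ∑ k ∈ Finset.range (m j + 1),
      A j k * (t:ℂ)^(p j) * (Real.log t:ℂ)^k with hE
  set g : ℝ → ℂ := (Set.Ioc (0:ℝ) 1).indicator (fun t => f t - E t) with hg
  set H : ℂ → ℂ := fun s => ∫ t in Set.Ioi (1:ℝ), (t:ℂ)^(s-1) * f t with hH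
  set Sg : ℂ → ℂ := fun s => ∑ j, ∑ k ∈ Finset.range (m j + 1),
      A j k * ((-1)^k * (k.factorial:ℂ)) / (s + p j)^(k+1) with hSg
  have hEcont : ContinuousOn E (Set.Ioi 0) := by
    refine continuousOn_finset_sum _ fun j _ => continuousOn_finset_sum _ fun k _ => ?_
    exact (continuousOn_const.mul (MD.contOn_cpow (p j))).mul ((MD.contOn_log).pow k)
  have hφcont : ContinuousOn (fun t => f t - E t) (Set.Ioi 0) := hf.sub hEcont
  have hgloc : LocallyIntegrableOn g (Set.Ioi 0) := by
    intro x hx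
    obtain ⟨U, hU, hUint⟩ := (hφcont.locallyIntegrableOn measurableSet_Ioi (μ := volume)) x hx
    exact ⟨U, hU, hUint.indicator measurableSet_Ioc⟩
  -- differentiability of mellin g on -M < re s
  have hmg_diff : ∀ s : ℂ, (-M : ℝ) < s.re → DifferentiableAt ℂ (mellin g) s := by
    intro s hs
    have htop : g =ᶠ[Filter.atTop] (fun _ => (0:ℂ)) := by
      filter_upwards [Filter.eventually_gt_atTop (1:ℝ)] with t ht
      exact Set.indicator_of_notMem (fun hmem => absurd hmem.2 (not_le.2 ht)) _
    have hbot : g =O[nhdsWithin 0 (Set.Ioi 0)] (fun t : ℝ => t ^ (-(-(M:ℝ)))) := by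
      simp only [neg_neg]
      rw [Asymptotics.isBigO_iff]
      refine ⟨C, ?_⟩
      filter_upwards [Ioo_mem_nhdsGT_of_mem (Set.left_mem_Ico.2 (lt_min hδ one_pos))] with t ht
      have ht0 : 0 < t := ht.1
      have htδ : t < δ := lt_of_lt_of_le ht.2 (min_le_left _ _)
      have ht1 : t ≤ 1 := le_of_lt (lt_of_lt_of_le ht.2 (min_le_right _ _))
      have hgt : g t = f t - E t := Set.indicator_of_mem (show t ∈ Set.Ioc (0:ℝ) 1 from ⟨ht0, ht1⟩) _
      rw [hgt]
      have hb := hbound t ht0 htδ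
      calc ‖f t - E t‖ ≤ C * t ^ (M:ℝ) := hb
        _ = C * ‖t ^ (M:ℝ)‖ := by
            rw [Real.norm_eq_abs, _root_.abs_of_nonneg (Real.rpow_nonneg ht0.le _)]
    refine mellin_differentiableAt_of_isBigO_rpow (a := s.re + 1) (b := -(M:ℝ)) hgloc
      ?_ (lt_add_one s.re) hbot hs
    exact (Asymptotics.isBigO_zero _ _).congr' htop.symm Filter.EventuallyEq.rfl
  -- measurability on Ioi 1
  have hmeasf : ∀ s' : ℂ, AEStronglyMeasurable (fun t : ℝ => (t:ℂ)^(s'-1) * f t)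
      (volume.restrict (Set.Ioi 1)) := fun s' =>
    (((MD.contOn_cpow (s'-1)).mono (Set.Ioi_subset_Ioi zero_le_one)).mul
      (hf.mono (Set.Ioi_subset_Ioi zero_le_one))).aestronglyMeasurable measurableSet_Ioi
  -- differentiability of H on re s < b
  have hH_diff : ∀ s : ℂ, s.re < b → DifferentiableAt ℂ H s := by
    intro s hsb
    obtain ⟨σ, hσ1, hσ2⟩ := exists_between (max_lt hab hsb)
    have hσa : a < σ := lt_of_le_of_lt (le_max_left _ _) hσ1
    have hσs : s.re < σ := lt_of_le_of_lt (le_max_right _ _) hσ1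
    set ε : ℝ := (σ - s.re)/2 with hεdef
    have hε : 0 < ε := by simp only [hεdef]; linarith
    have hfi := (hint σ ⟨hσa, hσ2⟩).mono_set (Set.Ioi_subset_Ioi zero_le_one)
    have hmeas' : AEStronglyMeasurable
        (fun t : ℝ => (t:ℂ)^(s-1) * ((Real.log t : ℂ) * f t)) (volume.restrict (Set.Ioi 1)) :=
      (((MD.contOn_cpow (s-1)).mono (Set.Ioi_subset_Ioi zero_le_one)).mul
        (((MD.contOn_log).mono (Set.Ioi_subset_Ioi zero_le_one)).mul
          (hf.mono (Set.Ioi_subset_Ioi zero_le_one)))).aestronglyMeasurable measurableSet_Ioi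
    have hb' : ∀ t ∈ Set.Ioi (1:ℝ), ∀ s' ∈ Metric.ball s ε,
        ‖(t:ℂ)^(s'-1) * ((Real.log t : ℂ) * f t)‖
          ≤ ε⁻¹ * (t ^ (σ-1) * ‖f t‖) := by
      intro t ht s' hs'
      have ht1 : (1:ℝ) < t := ht
      have ht0 : (0:ℝ) < t := lt_trans one_pos ht1
      have hlog0 : 0 ≤ Real.log t := Real.log_nonneg ht1.le
      have h1 : ‖(t:ℂ)^(s'-1) * ((Real.log t : ℂ) * f t)‖
          = t ^ (s'.re - 1) * (Real.log t * ‖f t‖) := by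
        rw [MD.norm_cpow_mul ht0, norm_mul, Complex.norm_real, Real.norm_eq_abs,
          _root_.abs_of_nonneg hlog0]
        simp [Complex.sub_re]
      rw [h1]
      have h2 : t ^ (s'.re - 1) ≤ t ^ (s.re + ε - 1) := by
        apply Real.rpow_le_rpow_of_exponent_le ht1.le
        have := MD.re_upper hs'
        linarith
      have h3 : Real.log t ≤ t ^ ε / ε := Real.log_le_rpow_div ht0.le hε
      calc t ^ (s'.re - 1) * (Real.log t * ‖f t‖)
          ≤ t ^ (s.re + ε - 1) * ((t ^ ε / ε) * ‖f t‖) := by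
            apply mul_le_mul h2 (mul_le_mul_of_nonneg_right h3 (norm_nonneg _))
              (by positivity) (by positivity)
        _ = ε⁻¹ * (t ^ (σ-1) * ‖f t‖) := by
            rw [div_eq_mul_inv]
            have : t ^ (s.re + ε - 1) * t ^ ε = t ^ (σ - 1) := by
              rw [← Real.rpow_add ht0]
              congr 1
              simp only [hεdef]; ring
            calc t ^ (s.re + ε - 1) * (t ^ ε * ε⁻¹ * ‖f t‖)
                = (t ^ (s.re + ε - 1) * t ^ ε) * ε⁻¹ * ‖f t‖ := by ring
              _ = ε⁻¹ * (t ^ (σ-1) * ‖f t‖) := by rw [this]; ring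
    have hi : IntegrableOn (fun t : ℝ => (t:ℂ)^(s-1) * f t) (Set.Ioi 1) := by
      refine hfi.mono' (hmeasf s) ?_
      filter_upwards [ae_restrict_mem measurableSet_Ioi] with t ht
      have ht1 : (1:ℝ) < t := ht
      have ht0 : (0:ℝ) < t := lt_trans one_pos ht1
      rw [MD.norm_cpow_mul ht0]
      simp only [Complex.sub_re, Complex.one_re]
      exact mul_le_mul_of_nonneg_right
        (Real.rpow_le_rpow_of_exponent_le ht1.le (by linarith)) (norm_nonneg _)
    exact (MD.DUI measurableSet_Ioi (Set.Ioi_subset_Ioi zero_le_one) hε hmeasf hmeas'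
      hb' (hfi.const_mul ε⁻¹) hi).differentiableAt
  -- the main identity on a < re s < b
  have hFval : ∀ s : ℂ, a < s.re → s.re < b → mellin g s + H s + Sg s = mellin f s := by
    intro s hsa hsb
    have hfs : IntegrableOn (fun t : ℝ => (t:ℂ)^(s-1) * f t) (Set.Ioi 0) := by
      refine (hint s.re ⟨hsa, hsb⟩).mono'
        (((MD.contOn_cpow (s-1)).mul hf).aestronglyMeasurable measurableSet_Ioi) ?_
      filter_upwards [ae_restrict_mem measurableSet_Ioi] with t ht
      rw [MD.norm_cpow_mul ht]
      simp [Complex.sub_re]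
    have hfs1 : IntegrableOn (fun t : ℝ => (t:ℂ)^(s-1) * f t) (Set.Ioc 0 1) :=
      hfs.mono_set Set.Ioc_subset_Ioi_self
    have hfs2 : IntegrableOn (fun t : ℝ => (t:ℂ)^(s-1) * f t) (Set.Ioi 1) :=
      hfs.mono_set (Set.Ioi_subset_Ioi zero_le_one)
    have hterm : ∀ (j : Fin J) (k : ℕ), IntegrableOn
        (fun t : ℝ => (t:ℂ)^(s-1) * (A j k * (t:ℂ)^(p j) * (Real.log t:ℂ)^k))
        (Set.Ioc 0 1) := by
      intro j k
      have hre : 0 < s.re + (p j).re := by have := (hp j).1; linarith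
      refine ((MD.aux_int hre k).const_mul (‖A j k‖)).mono' ?_ ?_
      · exact (((MD.contOn_cpow (s-1)).mono Set.Ioc_subset_Ioi_self).mul
          ((continuousOn_const.mul ((MD.contOn_cpow (p j)).mono Set.Ioc_subset_Ioi_self)).mul
            (((MD.contOn_log).mono Set.Ioc_subset_Ioi_self).pow k))).aestronglyMeasurable
          measurableSet_Ioc
      · filter_upwards [ae_restrict_mem measurableSet_Ioc] with t ht
        have ht0 : (0:ℝ) < t := ht.1
        rw [MD.norm_cpow_mul ht0]
        rw [show A j k * (t:ℂ)^(p j) * (Real.log t:ℂ)^k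
            = A j k * ((t:ℂ)^(p j) * (Real.log t:ℂ)^k) by ring]
        rw [norm_mul, MD.norm_cpow_mul ht0, MD.norm_log_pow]
        simp only [Complex.sub_re, Complex.one_re]
        rw [show t ^ (s.re - 1) * (‖A j k‖ * (t ^ (p j).re * |Real.log t| ^ k))
            = ‖A j k‖ * ((t ^ (s.re - 1) * t ^ (p j).re) * |Real.log t| ^ k) by ring]
        rw [← Real.rpow_add ht0]
        rw [show s.re - 1 + (p j).re = s.re + (p j).re - 1 by ring]
    have hEint : IntegrableOn (fun t : ℝ => (t:ℂ)^(s-1) * E t) (Set.Ioc 0 1) := by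
      have hrw : (fun t : ℝ => (t:ℂ)^(s-1) * E t)
          = fun t : ℝ => ∑ j, ∑ k ∈ Finset.range (m j + 1),
              (t:ℂ)^(s-1) * (A j k * (t:ℂ)^(p j) * (Real.log t:ℂ)^k) := by
        funext t
        simp only [hE, Finset.mul_sum]
      rw [hrw]
      exact integrable_finset_sum _ fun j _ => integrable_finset_sum _ fun k _ => hterm j k
    have hgint : IntegrableOn (fun t : ℝ => (t:ℂ)^(s-1) * (f t - E t)) (Set.Ioc 0 1) := by
      have := hfs1.sub hEint
      refine this.congr ?_
      filter_upwards with t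
      simp only [Pi.sub_apply]
      ring
    have hmg : mellin g s = ∫ t in Set.Ioc (0:ℝ) 1, (t:ℂ)^(s-1) * (f t - E t) := by
      rw [mellin]
      simp_rw [smul_eq_mul]
      rw [setIntegral_congr_fun measurableSet_Ioi (g := fun t : ℝ =>
        (Set.Ioc (0:ℝ) 1).indicator (fun t => (t:ℂ)^(s-1) * (f t - E t)) t) ?_]
      · rw [setIntegral_indicator measurableSet_Ioc,
          Set.inter_eq_self_of_subset_right Set.Ioc_subset_Ioi_self]
      · intro t _
        simp only [hg, Set.indicator_apply]
        split <;> simp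
    have hSval : (∫ t in Set.Ioc (0:ℝ) 1, (t:ℂ)^(s-1) * E t) = Sg s := by
      have hrw : (fun t : ℝ => (t:ℂ)^(s-1) * E t)
          = fun t : ℝ => ∑ j, ∑ k ∈ Finset.range (m j + 1),
              (t:ℂ)^(s-1) * (A j k * (t:ℂ)^(p j) * (Real.log t:ℂ)^k) := by
        funext t
        simp only [hE, Finset.mul_sum]
      rw [hrw, integral_finset_sum _ fun j _ => integrable_finset_sum _ fun k _ => hterm j k]
      rw [hSg]
      refine Finset.sum_congr rfl fun j _ => ?_
      rw [integral_finset_sum _ fun k _ => hterm j k]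
      refine Finset.sum_congr rfl fun k _ => ?_
      have hre : 0 < (s + p j).re := by
        have := (hp j).1
        simp only [Complex.add_re]
        linarith
      have hcongr : ∀ t ∈ Set.Ioc (0:ℝ) 1,
          (t:ℂ)^(s-1) * (A j k * (t:ℂ)^(p j) * (Real.log t:ℂ)^k)
            = A j k * ((t:ℂ)^((s + p j)-1) * (Real.log t:ℂ)^k) := by
        intro t ht
        rw [show s + p j - 1 = (s-1) + p j by ring,
          Complex.cpow_add _ _ (Complex.ofReal_ne_zero.mpr (ne_of_gt ht.1))]
        ring
      rw [setIntegral_congr_fun measurableSet_Ioc hcongr, integral_const_mul,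
        MD.key k (s + p j) hre]
      ring
    have hsplit : mellin f s = (∫ t in Set.Ioc (0:ℝ) 1, (t:ℂ)^(s-1) * f t) + H s := by
      rw [mellin]
      simp_rw [smul_eq_mul]
      rw [← Set.Ioc_union_Ioi_eq_Ioi (zero_le_one : (0:ℝ) ≤ 1)]
      rw [setIntegral_union Set.Ioc_disjoint_Ioi_same measurableSet_Ioi hfs1 hfs2]
    have hsub : (∫ t in Set.Ioc (0:ℝ) 1, (t:ℂ)^(s-1) * (f t - E t))
        = (∫ t in Set.Ioc (0:ℝ) 1, (t:ℂ)^(s-1) * f t)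
          - (∫ t in Set.Ioc (0:ℝ) 1, (t:ℂ)^(s-1) * E t) := by
      rw [← integral_sub hfs1 hEint]
      refine setIntegral_congr_fun measurableSet_Ioc fun t _ => ?_
      ring
    rw [hmg, hsub, hSval, hsplit]
    ring
  refine ⟨fun s => mellin g s + H s + Sg s, ?_, ?_, fun s => mellin g s + H s, ?_, ?_⟩
  · intro s h1 h2 h3
    refine ((hmg_diff s h1).add (hH_diff s h2)).add ?_
    refine DifferentiableAt.fun_sum fun j _ => DifferentiableAt.fun_sum fun k _ => ?_
    have hne : s + p j ≠ 0 := fun hcon => h3 j (eq_neg_of_add_eq_zero_left hcon)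
    exact (differentiableAt_const _).div
      ((differentiableAt_id.add_const (p j)).pow (k+1)) (pow_ne_zero _ hne)
  · intro s hsa hsb
    exact hFval s hsa hsb
  · intro s h1 h2
    exact (hmg_diff s h1).add (hH_diff s h2)
  · intro s _ _ _
    have : (∑ j, ∑ k ∈ Finset.range (m j + 1),
        A j k * ((-1) ^ k * (k.factorial : ℂ)) / (s + p j) ^ (k + 1)) = Sg s := rfl
    rw [this]
    ring
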